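/- For every nonnegative integer n, the identity ∑_{j=0}^n binom(n,j)^2 / binom(2n,2j) = 4^n / binom(2n,n) holds in ℚ. -/

import Mathlib

open Finset

private lemma four_mul_centralBinom (m : ℕ) :
    4 * m.centralBinom = (m + 1).centralBinom + 2 * catalan m := by
  have h1 := Nat.succ_mul_centralBinom_succ m
  have h2 := succ_mul_catalan_eq_centralBinom m
  refine Nat.eq_of_mul_eq_mul_left (Nat.succ_pos m) ?_
  calc (m + 1) * (4 * m.centralBinom)
      = 2 * (2 * m + 1) * m.centralBinom + 2 * m.centralBinom := by ring
    _ = (m + 1) * (m + 1).centralBinom + 2 * ((m + 1) * catalan m) := by rw [h1, h2]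
    _ = (m + 1) * ((m + 1).centralBinom + 2 * catalan m) := by ring

private lemma two_mul_sum_centralBinom_catalan (n : ℕ) :
    2 * ∑ k ∈ range (n + 1), Nat.centralBinom k * catalan (n - k)
      = Nat.centralBinom (n + 1) := by
  have hrefl : ∑ k ∈ range (n + 1), Nat.centralBinom k * catalan (n - k)
      = ∑ k ∈ range (n + 1), Nat.centralBinom (n - k) * catalan k := by
    rw [← Finset.sum_range_reflect]
    refine Finset.sum_congr rfl fun k hk => ?_
    have hk' : k ≤ n := Nat.lt_succ_iff.mp (Finset.mem_range.mp hk)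
    simp [Nat.succ_sub_succ, Nat.sub_sub_self hk']
  have hsum : 2 * ∑ k ∈ range (n + 1), Nat.centralBinom k * catalan (n - k)
      = ∑ k ∈ range (n + 1),
        (Nat.centralBinom k * catalan (n - k) + Nat.centralBinom (n - k) * catalan k) := by
    rw [Finset.sum_add_distrib, ← hrefl, two_mul]
  rw [hsum]
  have hterm : ∀ k ∈ range (n + 1),
      Nat.centralBinom k * catalan (n - k) + Nat.centralBinom (n - k) * catalan k
        = (n + 2) * (catalan k * catalan (n - k)) := by
    intro k hk
    have hk' : k ≤ n := Nat.lt_succ_iff.mp (Finset.mem_range.mp hk)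
    rw [← succ_mul_catalan_eq_centralBinom k, ← succ_mul_catalan_eq_centralBinom (n - k)]
    have : (k + 1) + (n - k + 1) = n + 2 := by omega
    calc (k + 1) * catalan k * catalan (n - k) + (n - k + 1) * catalan (n - k) * catalan k
        = ((k + 1) + (n - k + 1)) * (catalan k * catalan (n - k)) := by ring
      _ = (n + 2) * (catalan k * catalan (n - k)) := by rw [this]
  rw [Finset.sum_congr rfl hterm, ← Finset.mul_sum]
  have hcat : ∑ k ∈ range (n + 1), catalan k * catalan (n - k) = catalan (n + 1) := by
    rw [catalan_succ]
    exact (Fin.sum_univ_eq_sum_range (fun i => catalan i * catalan (n - i)) (n + 1)).symm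
  rw [hcat, succ_mul_catalan_eq_centralBinom]

private lemma sum_centralBinom_mul (n : ℕ) :
    ∑ k ∈ range (n + 1), Nat.centralBinom k * Nat.centralBinom (n - k) = 4 ^ n := by
  induction n with
  | zero => simp [Nat.centralBinom]
  | succ n ih =>
    have hshift : ∑ k ∈ range (n + 1), Nat.centralBinom k * Nat.centralBinom (n + 1 - k)
        = ∑ k ∈ range (n + 1), Nat.centralBinom k * Nat.centralBinom ((n - k) + 1) := by
      refine Finset.sum_congr rfl fun k hk => ?_
      have hk' : k ≤ n := Nat.lt_succ_iff.mp (Finset.mem_range.mp hk)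
      congr 2
      omega
    have hsplit : ∑ k ∈ range (n + 2), Nat.centralBinom k * Nat.centralBinom (n + 1 - k)
        = (∑ k ∈ range (n + 1), Nat.centralBinom k * Nat.centralBinom ((n - k) + 1))
          + Nat.centralBinom (n + 1) := by
      rw [Finset.sum_range_succ, hshift]
      simp [Nat.centralBinom]
    have hfour : (∑ k ∈ range (n + 1), Nat.centralBinom k * Nat.centralBinom ((n - k) + 1))
        + 2 * ∑ k ∈ range (n + 1), Nat.centralBinom k * catalan (n - k)
        = 4 * 4 ^ n := by
      rw [← ih, Finset.mul_sum, Finset.mul_sum, ← Finset.sum_add_distrib]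
      refine Finset.sum_congr rfl fun k hk => ?_
      have := four_mul_centralBinom (n - k)
      calc Nat.centralBinom k * Nat.centralBinom (n - k + 1)
            + 2 * (Nat.centralBinom k * catalan (n - k))
          = Nat.centralBinom k * (Nat.centralBinom (n - k + 1) + 2 * catalan (n - k)) := by ring
        _ = Nat.centralBinom k * (4 * Nat.centralBinom (n - k)) := by rw [← this]
        _ = 4 * (Nat.centralBinom k * Nat.centralBinom (n - k)) := by ring
    have hL := two_mul_sum_centralBinom_catalan n
    rw [hsplit]
    omega

private lemma term_eq (n j : ℕ) (hj : j ≤ n) :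
    ((Nat.choose n j : ℚ) ^ 2 / (Nat.choose (2 * n) (2 * j) : ℚ))
      = (Nat.centralBinom j * Nat.centralBinom (n - j) : ℚ) / (Nat.centralBinom n : ℚ) := by
  have h2j : 2 * j ≤ 2 * n := by omega
  rw [Nat.centralBinom, Nat.centralBinom, Nat.centralBinom]
  rw [Nat.cast_choose ℚ hj, Nat.cast_choose ℚ h2j,
    Nat.cast_choose ℚ (show j ≤ 2 * j by omega),
    Nat.cast_choose ℚ (show n - j ≤ 2 * (n - j) by omega),
    Nat.cast_choose ℚ (show n ≤ 2 * n by omega)]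
  have e1 : 2 * j - j = j := by omega
  have e2 : 2 * (n - j) - (n - j) = n - j := by omega
  have e3 : 2 * n - n = n := by omega
  have e4 : 2 * n - 2 * j = 2 * (n - j) := by omega
  rw [e1, e2, e3, e4]
  have f1 : (Nat.factorial j : ℚ) ≠ 0 := by positivity
  have f2 : (Nat.factorial (n - j) : ℚ) ≠ 0 := by positivity
  have f3 : (Nat.factorial n : ℚ) ≠ 0 := by positivity
  have f4 : (Nat.factorial (2 * j) : ℚ) ≠ 0 := by positivity
  have f5 : (Nat.factorial (2 * (n - j)) : ℚ) ≠ 0 := by positivity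
  have f6 : (Nat.factorial (2 * n) : ℚ) ≠ 0 := by positivity
  field_simp

/-- ∑_{j=0}^n C(n,j)² / C(2n,2j) = 4^n / C(2n,n)  in ℚ. -/
theorem sum_choose_sq_div_choose_eq_four_pow_div_centralBinom (n : ℕ) :
    ∑ j ∈ Finset.range (n + 1),
        ((Nat.choose n j : ℚ) ^ 2 / (Nat.choose (2 * n) (2 * j) : ℚ))
      = (4 : ℚ) ^ n / (Nat.choose (2 * n) n : ℚ) := by
  have step : ∑ j ∈ Finset.range (n + 1),
      ((Nat.choose n j : ℚ) ^ 2 / (Nat.choose (2 * n) (2 * j) : ℚ))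
      = ∑ j ∈ Finset.range (n + 1),
        (Nat.centralBinom j * Nat.centralBinom (n - j) : ℚ) / (Nat.centralBinom n : ℚ) := by
    refine Finset.sum_congr rfl fun j hj => ?_
    exact term_eq n j (Nat.lt_succ_iff.mp (Finset.mem_range.mp hj))
  rw [step, ← Finset.sum_div]
  have hc : (∑ j ∈ Finset.range (n + 1),
      (Nat.centralBinom j * Nat.centralBinom (n - j) : ℚ)) = (4 : ℚ) ^ n := by
    exact_mod_cast sum_centralBinom_mul n
  rw [hc, Nat.centralBinom]
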